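/- Consider a Facility Location game in which every agent's weight satisfies w_i ≥ 1, and let W = Σ_{i ∈ A} w_i. Let s be an α-approximate strong equilibrium (α ≥ 1). Then for every strategy profile s*, the social costs satisfy c(s) ≤ α·(1 + ln W)·c(s*). In particular, the strong Price of Anarchy of α-approximate strong equilibria in weighted Facility Location games is O(α·ln W). -/

import Mathlib

open Finset
open scoped Classical

/-- A Facility Location game: nodes `V`, agents `A`, connection costs `d`,
facility opening costs `β`, agent locations `u` and positive weights `w`. -/
structure FLGame (V A : Type*) [Fintype V] [Fintype A] where
  d : V → V → ℝ
  d_nonneg : ∀ x y, 0 ≤ d x y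
  β : V → ℝ
  β_nonneg : ∀ v, 0 ≤ β v
  u : A → V
  w : A → ℝ
  w_pos : ∀ i, 0 < w i
  V_nonempty : Nonempty V
  A_nonempty : Nonempty A

namespace FLGame

variable {V A : Type*} [Fintype V] [Fintype A]

/-- Total weight forwarded to node `v` under profile `s`. -/
noncomputable def Wmass (G : FLGame V A) (s : A → V) (v : V) : ℝ :=
  ∑ j, if s j = v then G.w j else 0

/-- Individual cost of agent `i` under profile `s`. -/
noncomputable def cost (G : FLGame V A) (s : A → V) (i : A) : ℝ :=
  G.w i * G.d (G.u i) (s i) + G.w i * G.β (s i) / G.Wmass s (s i)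

/-- Social cost of profile `s`. -/
noncomputable def social (G : FLGame V A) (s : A → V) : ℝ := ∑ i, G.cost s i

/-- All agents have unit weight. -/
def Unweighted (G : FLGame V A) : Prop := ∀ i, G.w i = 1

/-- `d` is a metric on `V`. -/
def Metric (G : FLGame V A) : Prop :=
  (∀ x, G.d x x = 0) ∧ (∀ x y, G.d x y = G.d y x) ∧ (∀ x y, 0 ≤ G.d x y) ∧
    (∀ x y z, G.d x z ≤ G.d x y + G.d y z)

/-- `s'` is obtained from `s` by a best-response move of agent `i`. -/
def BRMove (G : FLGame V A) (s s' : A → V) (i : A) : Prop :=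
  (∀ j, j ≠ i → s' j = s j) ∧ G.cost s' i < G.cost s i ∧
    (∀ s'' : A → V, (∀ j, j ≠ i → s'' j = s j) → G.cost s' i ≤ G.cost s'' i)

/-- `s` is reached from `s0` by iterative best response. -/
def ReachedByIBR (G : FLGame V A) (s0 s : A → V) : Prop :=
  ∃ (T : ℕ) (seq : ℕ → A → V), seq 0 = s0 ∧ seq T = s ∧
    ∀ t, t < T → ∃ i, G.BRMove (seq t) (seq (t + 1)) i

/-- `s` is a pure Nash equilibrium. -/
def IsPNE (G : FLGame V A) (s : A → V) : Prop :=
  ∀ (i : A) (v : V), G.cost s i ≤ G.cost (Function.update s i v) i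

/-- The nonempty coalition `I` deviates from `s` to `s'`, every member improving
by a factor strictly more than `α`. -/
def CoalDev (G : FLGame V A) (α : ℝ) (s s' : A → V) (I : Finset A) : Prop :=
  I.Nonempty ∧ (∀ j ∉ I, s' j = s j) ∧ ∀ i ∈ I, α * G.cost s' i < G.cost s i

/-- `s` is an `α`-approximate strong equilibrium. -/
def ApproxSE (G : FLGame V A) (α : ℝ) (s : A → V) : Prop :=
  ¬ ∃ (I : Finset A) (s' : A → V), G.CoalDev α s s' I

end FLGame

namespace FLGameAux

variable {V A : Type*} [Fintype V] [Fintype A]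

/-- Weight of coalition members in `I` that choose node `v` under `sstar`. -/
noncomputable def WIs (G : FLGame V A) (sstar : A → V) (I : Finset A) (v : V) : ℝ :=
  ∑ j ∈ I, if sstar j = v then G.w j else 0

lemma WIs_nonneg (G : FLGame V A) (sstar : A → V) (I : Finset A) (v : V) :
    0 ≤ FLGameAux.WIs G sstar I v := by
  refine Finset.sum_nonneg fun j _ => ?_
  split <;> [exact (G.w_pos j).le; exact le_rfl]

lemma le_WIs (G : FLGame V A) (sstar : A → V) {I : Finset A} {i : A} (hi : i ∈ I) :
    G.w i ≤ FLGameAux.WIs G sstar I (sstar i) := by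
  have := Finset.single_le_sum (f := fun j => if sstar j = sstar i then G.w j else 0)
    (fun j _ => by by_cases h : sstar j = sstar i <;> simp [h, (G.w_pos j).le]) hi
  simpa [FLGameAux.WIs] using this

lemma WIs_pos (G : FLGame V A) (sstar : A → V) {I : Finset A} {i : A} (hi : i ∈ I) :
    0 < FLGameAux.WIs G sstar I (sstar i) :=
  lt_of_lt_of_le (G.w_pos i) (le_WIs G sstar hi)

lemma WIs_erase (G : FLGame V A) (sstar : A → V) {I : Finset A} {i : A} (hi : i ∈ I) (v : V) :
    FLGameAux.WIs G sstar (I.erase i) v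
      = FLGameAux.WIs G sstar I v - (if sstar i = v then G.w i else 0) :=
  Finset.sum_erase_eq_sub hi

/-- From the approximate strong equilibrium condition: in any nonempty coalition `I`
there is an agent whose equilibrium cost is bounded by `α` times its cost when the
whole coalition deviates to `sstar`. -/
lemma exists_good (G : FLGame V A) {α : ℝ} (hα : 1 ≤ α) {s : A → V} (hSE : G.ApproxSE α s)
    (sstar : A → V) {I : Finset A} (hI : I.Nonempty) :
    ∃ i ∈ I, G.cost s i ≤ α * (G.w i * G.d (G.u i) (sstar i)
      + G.w i * G.β (sstar i) / FLGameAux.WIs G sstar I (sstar i)) := by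
  classical
  set s' : A → V := fun j => if j ∈ I then sstar j else s j with hs'
  have hnot : ¬ G.CoalDev α s s' I := fun h => hSE ⟨I, s', h⟩
  rw [FLGame.CoalDev] at hnot
  push_neg at hnot
  obtain ⟨i, hiI, hile⟩ := hnot hI (fun j hj => by simp [hs', hj])
  refine ⟨i, hiI, hile.trans ?_⟩
  have hs'i : s' i = sstar i := by simp [hs', hiI]
  have hmass : FLGameAux.WIs G sstar I (sstar i) ≤ G.Wmass s' (sstar i) := by
    unfold FLGame.Wmass FLGameAux.WIs
    refine le_trans (le_of_eq (Finset.sum_congr rfl fun j hj => ?_))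
      (Finset.sum_le_sum_of_subset_of_nonneg (Finset.subset_univ I)
        (fun j _ _ => by split <;> [exact (G.w_pos j).le; exact le_rfl]))
    simp [hs', hj]
  have hWpos : 0 < FLGameAux.WIs G sstar I (sstar i) := WIs_pos G sstar hiI
  have hα0 : (0:ℝ) ≤ α := le_trans zero_le_one hα
  refine mul_le_mul_of_nonneg_left ?_ hα0
  rw [FLGame.cost, hs'i]
  gcongr
  exact mul_nonneg (G.w_pos i).le (G.β_nonneg _)

/-- Key charging lemma, by strong induction on the coalition. -/
lemma key (G : FLGame V A) (hw : ∀ i, 1 ≤ G.w i) {α : ℝ} (hα : 1 ≤ α)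
    {s : A → V} (hSE : G.ApproxSE α s) (sstar : A → V) (I : Finset A) :
    ∑ i ∈ I, G.cost s i ≤
      α * ∑ i ∈ I, G.w i * G.d (G.u i) (sstar i)
      + α * ∑ v ∈ I.image sstar, G.β v * (1 + Real.log (FLGameAux.WIs G sstar I v)) := by
  classical
  induction I using Finset.strongInduction with
  | _ I IH =>
  rcases I.eq_empty_or_nonempty with rfl | hI
  · simp
  obtain ⟨i, hiI, hbound⟩ := exists_good G hα hSE sstar hI
  set J := I.erase i with hJdef
  have hins : insert i J = I := Finset.insert_erase hiI
  have hiJ : i ∉ J := Finset.notMem_erase i I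
  have IH' := IH J (Finset.erase_ssubset hiI)
  have hα0 : (0:ℝ) ≤ α := le_trans zero_le_one hα
  set v0 := sstar i with hv0
  set S := FLGameAux.WIs G sstar I v0 with hSdef
  have hSpos : 0 < S := WIs_pos G sstar hiI
  -- the crucial per-facility inequality
  have hfac : G.w i * G.β v0 / S + ∑ v ∈ J.image sstar,
        G.β v * (1 + Real.log (FLGameAux.WIs G sstar J v))
      ≤ ∑ v ∈ I.image sstar, G.β v * (1 + Real.log (FLGameAux.WIs G sstar I v)) := by
    have himg : I.image sstar = insert v0 (J.image sstar) := by
      rw [← hins, Finset.image_insert]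
    have hWJ : ∀ v, v ≠ v0 → FLGameAux.WIs G sstar J v = FLGameAux.WIs G sstar I v := by
      intro v hv
      rw [hJdef, WIs_erase G sstar hiI, if_neg (fun h => hv ((hv0.trans h).symm)), sub_zero]
    by_cases hv0J : v0 ∈ J.image sstar
    · -- another coalition member also uses v0
      have himg2 : I.image sstar = J.image sstar := by
        rw [himg, Finset.insert_eq_self.mpr hv0J]
      obtain ⟨j, hjJ, hjv0⟩ := Finset.mem_image.mp hv0J
      have hSJ : FLGameAux.WIs G sstar J v0 = S - G.w i := by
        rw [hJdef, WIs_erase G sstar hiI, if_pos hv0.symm]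
      have hSJpos : 0 < S - G.w i := by
        rw [← hSJ]; rw [← hjv0]; exact WIs_pos G sstar hjJ
      have hlog : G.w i / S ≤ Real.log S - Real.log (S - G.w i) := by
        have h1 := Real.log_le_sub_one_of_pos (show (0:ℝ) < (S - G.w i) / S from
          div_pos hSJpos hSpos)
        rw [Real.log_div (ne_of_gt hSJpos) (ne_of_gt hSpos)] at h1
        have h2 : (S - G.w i) / S - 1 = -(G.w i / S) := by field_simp; ring
        linarith
      rw [himg2,
        ← Finset.add_sum_erase _ (fun v => G.β v * (1 + Real.log (FLGameAux.WIs G sstar I v))) hv0J,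
        ← Finset.add_sum_erase _ (fun v => G.β v * (1 + Real.log (FLGameAux.WIs G sstar J v))) hv0J]
      have heq : ∑ v ∈ (J.image sstar).erase v0,
            G.β v * (1 + Real.log (FLGameAux.WIs G sstar J v))
          = ∑ v ∈ (J.image sstar).erase v0,
            G.β v * (1 + Real.log (FLGameAux.WIs G sstar I v)) := by
        refine Finset.sum_congr rfl fun v hv => ?_
        rw [hWJ v (Finset.ne_of_mem_erase hv)]
      rw [heq, hSJ, ← hSdef]
      have hkey2 : G.β v0 * (G.w i / S) ≤ G.β v0 * (Real.log S - Real.log (S - G.w i)) :=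
        mul_le_mul_of_nonneg_left hlog (G.β_nonneg v0)
      have hrw : G.w i * G.β v0 / S = G.β v0 * (G.w i / S) := by ring
      rw [hrw]
      nlinarith [hkey2]
    · -- i is the only coalition member at v0
      have hSwi : S = G.w i := by
        rw [hSdef, ← hins]
        unfold FLGameAux.WIs
        rw [Finset.sum_insert hiJ, if_pos hv0.symm]
        have : ∑ j ∈ J, (if sstar j = v0 then G.w j else 0) = 0 := by
          refine Finset.sum_eq_zero fun j hj => ?_
          rw [if_neg]
          intro h
          exact hv0J (Finset.mem_image.mpr ⟨j, hj, h⟩)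
        rw [this, add_zero]
      rw [himg, Finset.sum_insert hv0J]
      have heq : ∑ v ∈ J.image sstar,
            G.β v * (1 + Real.log (FLGameAux.WIs G sstar J v))
          = ∑ v ∈ J.image sstar,
            G.β v * (1 + Real.log (FLGameAux.WIs G sstar I v)) := by
        refine Finset.sum_congr rfl fun v hv => ?_
        rw [hWJ v (fun h => hv0J (h ▸ hv))]
      rw [heq]
      have hterm : G.w i * G.β v0 / S ≤ G.β v0 * (1 + Real.log S) := by
        rw [hSwi]
        rw [mul_comm (G.w i) (G.β v0), mul_div_assoc, div_self (ne_of_gt (G.w_pos i)), mul_one]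
        have hlogw : 0 ≤ Real.log (G.w i) := Real.log_nonneg (hw i)
        nlinarith [G.β_nonneg v0]
      linarith
  -- assemble
  have hsum1 : ∑ j ∈ I, G.cost s j = G.cost s i + ∑ j ∈ J, G.cost s j :=
    (Finset.add_sum_erase _ _ hiI).symm
  have hsum2 : ∑ j ∈ I, G.w j * G.d (G.u j) (sstar j)
      = G.w i * G.d (G.u i) (sstar i) + ∑ j ∈ J, G.w j * G.d (G.u j) (sstar j) :=
    (Finset.add_sum_erase _ _ hiI).symm
  rw [hsum1, hsum2]
  have hb : G.cost s i ≤ α * (G.w i * G.d (G.u i) v0 + G.w i * G.β v0 / S) := hbound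
  have hmul := mul_le_mul_of_nonneg_left hfac hα0
  calc G.cost s i + ∑ j ∈ J, G.cost s j
      ≤ α * (G.w i * G.d (G.u i) v0 + G.w i * G.β v0 / S)
        + (α * ∑ j ∈ J, G.w j * G.d (G.u j) (sstar j)
          + α * ∑ v ∈ J.image sstar, G.β v * (1 + Real.log (FLGameAux.WIs G sstar J v))) :=
        add_le_add hb IH'
    _ ≤ _ := by
        rw [mul_add] at hmul ⊢
        rw [mul_add]
        linarith

end FLGameAux

/-- In a weighted game with all weights at least `1` and total weight
`W`, any `α`-approximate strong equilibrium `s` satisfies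
`c(s) ≤ α · (1 + ln W) · c(s*)` for every profile `s*`. -/
theorem stmt14 {V A : Type*} [Fintype V] [Fintype A] (G : FLGame V A)
    (hw : ∀ i, 1 ≤ G.w i) (α : ℝ) (hα : 1 ≤ α) (s : A → V)
    (hSE : G.ApproxSE α s) (sstar : A → V) :
    G.social s ≤ α * (1 + Real.log (∑ i, G.w i)) * G.social sstar := by
  classical
  have hα0 : (0:ℝ) ≤ α := le_trans zero_le_one hα
  set W : ℝ := ∑ i, G.w i with hWdef
  obtain ⟨i₀⟩ := G.A_nonempty
  have hW1 : (1:ℝ) ≤ W := by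
    calc (1:ℝ) ≤ G.w i₀ := hw i₀
      _ ≤ W := Finset.single_le_sum (fun j _ => (G.w_pos j).le) (Finset.mem_univ i₀)
  have hWpos : (0:ℝ) < W := lt_of_lt_of_le one_pos hW1
  have hlogW : 0 ≤ Real.log W := Real.log_nonneg hW1
  -- decompose social cost of sstar
  set D : ℝ := ∑ i, G.w i * G.d (G.u i) (sstar i) with hDdef
  set B : ℝ := ∑ v ∈ Finset.univ.image sstar, G.β v with hBdef
  have hD0 : 0 ≤ D :=
    Finset.sum_nonneg fun i _ => mul_nonneg (G.w_pos i).le (G.d_nonneg _ _)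
  have hB0 : 0 ≤ B := Finset.sum_nonneg fun v _ => G.β_nonneg v
  have hmass_eq : ∀ i : A, G.Wmass sstar (sstar i)
      = ∑ j ∈ Finset.univ.filter (fun j => sstar j = sstar i), G.w j := by
    intro i
    rw [FLGame.Wmass, Finset.sum_filter]
  have hmass_pos : ∀ i : A, 0 < G.Wmass sstar (sstar i) := by
    intro i
    rw [hmass_eq]
    refine Finset.sum_pos (fun j _ => G.w_pos j) ⟨i, by simp⟩
  have hfacsum : ∑ i, G.w i * G.β (sstar i) / G.Wmass sstar (sstar i) = B := by
    rw [hBdef]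
    refine (Finset.sum_image' _ fun c _ => ?_).symm
    have hfw : ∑ j ∈ Finset.univ.filter (fun j => sstar j = sstar c),
        G.w j * G.β (sstar j) / G.Wmass sstar (sstar j)
        = ∑ j ∈ Finset.univ.filter (fun j => sstar j = sstar c),
        G.w j * (G.β (sstar c) / G.Wmass sstar (sstar c)) := by
      refine Finset.sum_congr rfl fun j hj => ?_
      rw [(Finset.mem_filter.mp hj).2]
      ring
    rw [hfw, ← Finset.sum_mul, ← hmass_eq c]
    field_simp
    rw [mul_div_assoc,
      div_self (ne_of_gt (hmass_pos c)), mul_one]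
  have hsocstar : G.social sstar = D + B := by
    rw [FLGame.social, hDdef, ← hfacsum, ← Finset.sum_add_distrib]
    rfl
  -- apply key lemma at the full coalition
  have hkey := FLGameAux.key G hw hα hSE sstar Finset.univ
  have hsoc : G.social s = ∑ i ∈ Finset.univ, G.cost s i := rfl
  have hWIle : ∀ v ∈ Finset.univ.image sstar,
      G.β v * (1 + Real.log (FLGameAux.WIs G sstar Finset.univ v))
        ≤ G.β v * (1 + Real.log W) := by
    intro v hv
    obtain ⟨j, _, hjv⟩ := Finset.mem_image.mp hv
    have h1 : 0 < FLGameAux.WIs G sstar Finset.univ v := by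
      rw [← hjv]; exact FLGameAux.WIs_pos G sstar (Finset.mem_univ j)
    have h2 : FLGameAux.WIs G sstar Finset.univ v ≤ W := by
      rw [hWdef]
      refine Finset.sum_le_sum fun j _ => ?_
      split <;> [exact le_rfl; exact (G.w_pos j).le]
    have := Real.log_le_log h1 h2
    have hβ := G.β_nonneg v
    nlinarith
  have hstep : ∑ v ∈ Finset.univ.image sstar,
      G.β v * (1 + Real.log (FLGameAux.WIs G sstar Finset.univ v))
      ≤ (1 + Real.log W) * B := by
    calc ∑ v ∈ Finset.univ.image sstar,
        G.β v * (1 + Real.log (FLGameAux.WIs G sstar Finset.univ v))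
        ≤ ∑ v ∈ Finset.univ.image sstar, G.β v * (1 + Real.log W) :=
          Finset.sum_le_sum hWIle
      _ = (1 + Real.log W) * B := by rw [hBdef, Finset.mul_sum]; exact Finset.sum_congr rfl fun v _ => mul_comm _ _
  rw [hsoc, hsocstar]
  calc ∑ i ∈ Finset.univ, G.cost s i
      ≤ α * D + α * ∑ v ∈ Finset.univ.image sstar,
          G.β v * (1 + Real.log (FLGameAux.WIs G sstar Finset.univ v)) := hkey
    _ ≤ α * D + α * ((1 + Real.log W) * B) := by
        have := mul_le_mul_of_nonneg_left hstep hα0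
        linarith
    _ ≤ α * (1 + Real.log W) * (D + B) := by nlinarith [mul_nonneg (mul_nonneg hα0 hlogW) hD0]
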